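/- Let (Ω, 𝓔, μ) be a complete σ-finite measure space, X a Polish space, and F : Ω → Set X a random closed set, i.e. each F ω is closed and {ω | (F ω ∩ U).Nonempty} ∈ 𝓔 for every open U ⊆ X. Then for every Borel set E ⊆ X the set {ω ∈ Ω | (F ω ∩ E).Nonempty} belongs to 𝓔. -/

import Mathlib

open MeasureTheory Set
open scoped ENNReal NNReal

section Souslin

variable {Ω : Type*} [MeasurableSpace Ω]

/-- Core Lusin–Sierpiński: the result of the Souslin operation applied to a
monotone scheme of measurable sets is null-measurable, for a finite measure. -/
theorem souslin_nullMeasurable_aux (μ : Measure Ω) [IsFiniteMeasure μ]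
    (A : ℕ → (ℕ → ℕ) → Set Ω)
    (hpre : ∀ (k : ℕ) (τ τ' : ℕ → ℕ), (∀ j < k, τ j = τ' j) → A k τ = A k τ')
    (hmono : ∀ (k : ℕ) (τ : ℕ → ℕ), A (k + 1) τ ⊆ A k τ)
    (hmeas : ∀ k τ, MeasurableSet (A k τ)) :
    NullMeasurableSet (⋃ τ : ℕ → ℕ, ⋂ k, A k τ) μ := by
  set S : Set Ω := ⋃ τ : ℕ → ℕ, ⋂ k, A k τ with hS
  -- the partial Souslin sets with bounded initial coordinates
  set Sb : (ℕ → ℕ) → ℕ → Set Ω :=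
    fun N k => ⋃ τ ∈ {τ : ℕ → ℕ | ∀ j < k, τ j ≤ N j}, ⋂ m, A m τ with hSb
  have hSb0 : ∀ N, Sb N 0 = S := by
    intro N; simp [hSb, hS]
  have hSb_pre : ∀ (N N' : ℕ → ℕ) (k : ℕ), (∀ j < k, N j = N' j) → Sb N k = Sb N' k := by
    intro N N' k h
    have : {τ : ℕ → ℕ | ∀ j < k, τ j ≤ N j} = {τ : ℕ → ℕ | ∀ j < k, τ j ≤ N' j} := by
      ext τ
      exact ⟨fun hτ j hj => (h j hj) ▸ hτ j hj, fun hτ j hj => (h j hj).symm ▸ hτ j hj⟩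
    simp only [hSb, this]
  -- main inner approximation step
  have key : ∀ (ε : ℝ≥0∞), ε ≠ 0 → ∃ K : Set Ω, MeasurableSet K ∧ K ⊆ S ∧ μ S ≤ μ K + ε := by
    intro ε hε
    obtain ⟨δ, hδpos, hδsum⟩ := ENNReal.exists_pos_sum_of_countable hε ℕ
    -- the choice of a good bound at level k
    have choice : ∀ (N : ℕ → ℕ) (k : ℕ),
        ∃ n : ℕ, μ (Sb N k) ≤ μ (Sb (Function.update N k n) (k + 1)) + δ k := by
      intro N k
      have hmonoN : Monotone (fun n => Sb (Function.update N k n) (k + 1)) := by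
        intro a b hab
        simp only [hSb]
        refine iUnion₂_mono' fun τ hτ => ⟨τ, fun j hj => ?_, subset_rfl⟩
        rcases Nat.lt_succ_iff_lt_or_eq.1 hj with hj' | rfl
        · simpa [Function.update_of_ne hj'.ne] using
            (by simpa [Function.update_of_ne hj'.ne] using hτ j hj)
        · simpa [Function.update_self] using le_trans (by simpa using hτ j hj) hab
      have hcup : (⋃ n, Sb (Function.update N k n) (k + 1)) = Sb N k := by
        apply Subset.antisymm
        · refine iUnion_subset fun n => ?_
          simp only [hSb]
          refine iUnion₂_mono' fun τ hτ => ⟨τ, fun j hj => ?_, subset_rfl⟩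
          have := hτ j (Nat.lt_succ_of_lt hj)
          rwa [Function.update_of_ne hj.ne] at this
        · simp only [hSb]
          refine iUnion₂_subset fun τ hτ => ?_
          refine subset_iUnion_of_subset (τ k) ?_
          refine subset_iUnion₂_of_subset τ (fun j hj => ?_) subset_rfl
          rcases Nat.lt_succ_iff_lt_or_eq.1 hj with hj' | rfl
          · rw [Function.update_of_ne hj'.ne]; exact hτ j hj'
          · simp
      have hsup : μ (Sb N k) = ⨆ n, μ (Sb (Function.update N k n) (k + 1)) := by
        rw [← hcup, hmonoN.measure_iUnion]
      rcases le_or_gt (μ (Sb N k)) ((δ k : ℝ≥0∞)) with hle | hlt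
      · exact ⟨0, le_trans hle (le_add_self)⟩
      · have hfin : μ (Sb N k) ≠ ∞ := measure_ne_top μ _
        have hsub : μ (Sb N k) - δ k < μ (Sb N k) :=
          ENNReal.sub_lt_self hfin (lt_of_le_of_lt zero_le hlt).ne'
            (by exact_mod_cast (hδpos k).ne')
        have h2 : μ (Sb N k) - δ k < ⨆ n, μ (Sb (Function.update N k n) (k + 1)) := by
          rw [← hsup]; exact hsub
        obtain ⟨n, hn⟩ := lt_iSup_iff.1 h2
        exact ⟨n, tsub_le_iff_right.1 hn.le⟩
    -- recursively construct the bounds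
    let g : ℕ → (ℕ → ℕ) := fun k => Nat.rec (fun _ => 0)
      (fun k gk => Function.update gk k (choice gk k).choose) k
    have hg_succ : ∀ k, g (k + 1) = Function.update (g k) k (choice (g k) k).choose := fun k => rfl
    set N : ℕ → ℕ := fun k => g (k + 1) k with hN
    have hgN : ∀ k, ∀ j < k, g k j = N j := by
      intro k
      induction k with
      | zero => intro j hj; omega
      | succ k ih =>
        intro j hj
        rcases Nat.lt_succ_iff_lt_or_eq.1 hj with hj' | rfl
        · rw [hg_succ, Function.update_of_ne hj'.ne, ih j hj']
        · rfl
    have hinv : ∀ k, μ S ≤ μ (Sb (g k) k) + ∑ j ∈ Finset.range k, (δ j : ℝ≥0∞) := by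
      intro k
      induction k with
      | zero => simp [hSb0]
      | succ k ih =>
        refine le_trans ih ?_
        calc μ (Sb (g k) k) + ∑ j ∈ Finset.range k, (δ j : ℝ≥0∞)
            ≤ (μ (Sb (g (k + 1)) (k + 1)) + δ k) + ∑ j ∈ Finset.range k, (δ j : ℝ≥0∞) := by
              exact add_le_add_left ((choice (g k) k).choose_spec.trans (by rw [← hg_succ])) _
          _ = μ (Sb (g (k + 1)) (k + 1)) + ∑ j ∈ Finset.range (k + 1), (δ j : ℝ≥0∞) := by
              rw [Finset.sum_range_succ]; ring
    have hinv' : ∀ k, μ S ≤ μ (Sb N k) + ε := by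
      intro k
      refine le_trans (hinv k) ?_
      rw [hSb_pre (g k) N k (hgN k)]
      exact add_le_add_right (le_trans (ENNReal.sum_le_tsum _) hδsum.le) _
    -- the measurable tree approximations
    set ext : (k : ℕ) → (Fin k → ℕ) → (ℕ → ℕ) :=
      fun k v j => if h : j < k then v ⟨j, h⟩ else 0 with hext
    set T : ℕ → Set Ω := fun k => ⋃ v : {v : Fin k → ℕ // ∀ j, v j ≤ N j.1}, A k (ext k v.1)
      with hT
    have hTmeas : ∀ k, MeasurableSet (T k) := fun k => MeasurableSet.iUnion fun v => hmeas _ _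
    have hST : ∀ k, Sb N k ⊆ T k := by
      intro k
      simp only [hSb]
      refine iUnion₂_subset fun τ hτ => ?_
      refine subset_trans (iInter_subset _ k) ?_
      have heq : A k τ = A k (ext k (fun j => τ j.1)) :=
        hpre k _ _ (fun j hj => by simp [hext, hj])
      rw [heq]
      exact subset_iUnion_of_subset ⟨fun j => τ j.1, fun j => hτ j.1 j.2⟩ subset_rfl
    have hTanti : Antitone T := by
      apply antitone_nat_of_succ_le
      intro k
      simp only [hT]
      refine iUnion_subset fun v => ?_
      refine subset_trans (hmono k _) ?_
      have heq : A k (ext (k+1) v.1) = A k (ext k (fun j => v.1 j.castSucc)) :=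
        hpre k _ _ (fun j hj => by simp [hext, hj, Nat.lt_succ_of_lt hj])
      rw [heq]
      exact subset_iUnion_of_subset ⟨fun j => v.1 j.castSucc, fun j => v.2 j.castSucc⟩ subset_rfl
    have hTS : (⋂ k, T k) ⊆ S := by
      intro ω hω
      haveI : ∀ j : ℕ, Finite (Set.Iic (N j)) := fun j => (Set.finite_Iic _).to_subtype
      set P := (j : ℕ) → (Set.Iic (N j)) with hP
      set C : ℕ → Set P := fun k => {p | ω ∈ A k (fun j => (p j : ℕ))} with hC
      have hCne : ∀ k, (C k).Nonempty := by
        intro k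
        have hTk : ω ∈ T k := mem_iInter.1 hω k
        simp only [hT, mem_iUnion] at hTk
        obtain ⟨v, hv⟩ := hTk
        refine ⟨fun j => if h : j < k then ⟨v.1 ⟨j, h⟩, v.2 _⟩ else ⟨0, Set.mem_Iic.2 (Nat.zero_le _)⟩, ?_⟩
        simp only [hC, mem_setOf_eq]
        have heq : A k (fun j => (((if h : j < k then (⟨v.1 ⟨j, h⟩, v.2 _⟩ : Set.Iic (N j))
              else ⟨0, Set.mem_Iic.2 (Nat.zero_le _)⟩) : Set.Iic (N j)) : ℕ)) = A k (ext k v.1) :=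
          hpre k _ _ (fun j hj => by simp [hext, hj])
        rw [heq]; exact hv
      have hCanti : ∀ k, C (k+1) ⊆ C k := fun k p hp => hmono k _ hp
      have hCclosed : ∀ k, IsClosed (C k) := by
        intro k
        have heq : C k = (fun (p : P) (j : Fin k) => p j.1) ⁻¹'
            {w : (j : Fin k) → Set.Iic (N j.1) |
              ω ∈ A k (fun j => if h : j < k then (w ⟨j, h⟩ : ℕ) else 0)} := by
          ext p
          simp only [hC, mem_setOf_eq, mem_preimage]
          constructor
          · intro hp
            exact (hpre k (fun j => ((p j : ℕ)))
              (fun j => if h : j < k then ((p j : ℕ)) else 0)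
              (fun j hj => by beta_reduce; rw [dif_pos hj])).subset hp
          · intro hp
            exact (hpre k (fun j => if h : j < k then ((p j : ℕ)) else 0)
              (fun j => ((p j : ℕ))) (fun j hj => by beta_reduce; rw [dif_pos hj])).subset hp
        rw [heq]
        exact (isClosed_discrete _).preimage (continuous_pi fun j => continuous_apply _)
      obtain ⟨p, hp⟩ := IsCompact.nonempty_iInter_of_sequence_nonempty_isCompact_isClosed
        C hCanti hCne ((hCclosed 0).isCompact) hCclosed
      exact mem_iUnion.2 ⟨fun j => (p j : ℕ), mem_iInter.2 fun k => mem_iInter.1 hp k⟩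
    refine ⟨⋂ k, T k, MeasurableSet.iInter hTmeas, hTS, ?_⟩
    have h1 : μ (⋂ k, T k) = ⨅ k, μ (T k) :=
      hTanti.measure_iInter (fun k => (hTmeas k).nullMeasurableSet) ⟨0, measure_ne_top μ _⟩
    rw [h1, ENNReal.iInf_add]
    exact le_iInf fun k => le_trans (hinv' k) (add_le_add_left (measure_mono (hST k)) _)
  -- conclude null-measurability from the inner approximations
  have hex : ∀ m : ℕ, ∃ K, MeasurableSet K ∧ K ⊆ S ∧ μ S ≤ μ K + ((m : ℝ≥0∞) + 1)⁻¹ :=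
    fun m => key _ (by simp)
  choose K hKmeas hKsub hKle using hex
  set K' := ⋃ m, K m with hK'
  have hK'meas : MeasurableSet K' := MeasurableSet.iUnion hKmeas
  have hK'sub : K' ⊆ S := iUnion_subset hKsub
  have hle : μ S ≤ μ K' := by
    refine ENNReal.le_of_forall_pos_le_add fun η hη hfin => ?_
    obtain ⟨m, hm⟩ := ENNReal.exists_inv_nat_lt (a := (η : ℝ≥0∞)) (by exact_mod_cast hη.ne')
    have h2 : ((m : ℝ≥0∞) + 1)⁻¹ ≤ (η : ℝ≥0∞) := by
      refine le_trans (ENNReal.inv_le_inv.2 ?_) hm.le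
      exact le_add_right le_rfl
    calc μ S ≤ μ (K m) + ((m : ℝ≥0∞) + 1)⁻¹ := hKle m
      _ ≤ μ K' + η := add_le_add (measure_mono (subset_iUnion K m)) h2
  have hnull : μ (S \ K') = 0 := by
    have hdiff : μ (toMeasurable μ S \ K') = 0 := by
      rw [measure_diff (hK'sub.trans (subset_toMeasurable μ S)) hK'meas.nullMeasurableSet
        (measure_ne_top μ _), measure_toMeasurable]
      exact tsub_eq_zero_of_le hle
    exact measure_mono_null (diff_subset_diff_left (subset_toMeasurable μ S)) hdiff
  have hrw : S = K' ∪ (S \ K') := (union_diff_cancel hK'sub).symm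
  rw [hrw]
  exact hK'meas.nullMeasurableSet.union (NullMeasurableSet.of_null hnull)

/-- Lusin–Sierpiński: the Souslin operation applied to measurable sets yields a
null-measurable set, for any σ-finite measure. -/
theorem souslin_nullMeasurable (μ : Measure Ω) [SigmaFinite μ]
    (A : ℕ → (ℕ → ℕ) → Set Ω)
    (hpre : ∀ (k : ℕ) (τ τ' : ℕ → ℕ), (∀ j < k, τ j = τ' j) → A k τ = A k τ')
    (hmeas : ∀ k τ, MeasurableSet (A k τ)) :
    NullMeasurableSet (⋃ τ : ℕ → ℕ, ⋂ k, A k τ) μ := by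
  -- monotonize the scheme
  set B : ℕ → (ℕ → ℕ) → Set Ω := fun k τ => ⋂ j ∈ Finset.range (k+1), A j τ with hB
  have hBpre : ∀ (k : ℕ) (τ τ' : ℕ → ℕ), (∀ j < k, τ j = τ' j) → B k τ = B k τ' := by
    intro k τ τ' h
    refine iInter₂_congr fun j hj => hpre j τ τ' fun i hi => h i ?_
    exact lt_of_lt_of_le hi (Nat.lt_succ_iff.1 (Finset.mem_range.1 hj))
  have hBmono : ∀ (k : ℕ) (τ : ℕ → ℕ), B (k + 1) τ ⊆ B k τ := by
    intro k τ ω hω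
    simp only [hB, mem_iInter, Finset.mem_range] at hω ⊢
    exact fun j hj => hω j (by omega)
  have hBmeas : ∀ k τ, MeasurableSet (B k τ) :=
    fun k τ => MeasurableSet.biInter (Finset.range (k+1)).countable_toSet fun j _ => hmeas j τ
  have hculS : (⋃ τ : ℕ → ℕ, ⋂ k, A k τ) = ⋃ τ : ℕ → ℕ, ⋂ k, B k τ := by
    refine iUnion_congr fun τ => ?_
    ext ω
    simp only [hB, mem_iInter, Finset.mem_range]
    exact ⟨fun h k j _ => h j, fun h k => h k k (Nat.lt_succ_self k)⟩
  rw [hculS]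
  set S := ⋃ τ : ℕ → ℕ, ⋂ k, B k τ with hSdef
  -- σ-finite reduction
  set D : ℕ → Set Ω := disjointed (spanningSets μ) with hD
  have hDmeas : ∀ n, MeasurableSet (D n) :=
    MeasurableSet.disjointed fun n => measurableSet_spanningSets μ n
  have hDfin : ∀ n, μ (D n) ≠ ∞ := fun n =>
    (lt_of_le_of_lt (measure_mono (disjointed_subset _ n)) (measure_spanningSets_lt_top μ n)).ne
  have hDcov : (⋃ n, D n) = univ := by rw [iUnion_disjointed, iUnion_spanningSets]
  have hres : ∀ n, NullMeasurableSet S (μ.restrict (D n)) := by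
    intro n
    haveI : IsFiniteMeasure (μ.restrict (D n)) :=
      ⟨by rw [Measure.restrict_apply_univ]; exact (hDfin n).lt_top⟩
    exact souslin_nullMeasurable_aux _ B hBpre hBmono hBmeas
  have hex : ∀ n, ∃ t, t ⊆ S ∧ MeasurableSet t ∧ t =ᵐ[μ.restrict (D n)] S := by
    intro n
    obtain ⟨t, hts, htm, htae⟩ := (hres n).exists_measurable_subset_ae_eq
    exact ⟨t, hts, htm, htae⟩
  choose t hts htmeas htae using hex
  set t' : Set Ω := ⋃ n, t n ∩ D n with ht'
  have ht'meas : MeasurableSet t' :=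
    MeasurableSet.iUnion fun n => (htmeas n).inter (hDmeas n)
  have ht'sub : t' ⊆ S := iUnion_subset fun n => inter_subset_left.trans (hts n)
  have hnull : μ (S \ t') = 0 := by
    have hsub : S \ t' ⊆ ⋃ n, (S \ t n) ∩ D n := by
      intro x hx
      have hxD : x ∈ ⋃ n, D n := hDcov ▸ mem_univ x
      obtain ⟨n, hn⟩ := mem_iUnion.1 hxD
      exact mem_iUnion.2 ⟨n, ⟨hx.1, fun hxt => hx.2 (mem_iUnion.2 ⟨n, ⟨hxt, hn⟩⟩)⟩, hn⟩
    refine measure_mono_null hsub (measure_iUnion_null fun n => ?_)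
    rw [← Measure.restrict_apply' (hDmeas n)]
    exact (ae_eq_set.1 (htae n)).2
  have hrw : S = t' ∪ (S \ t') := (union_diff_cancel ht'sub).symm
  rw [hrw]
  exact ht'meas.nullMeasurableSet.union (NullMeasurableSet.of_null hnull)

end Souslin

/-- A random closed set in a Polish space, over a complete σ-finite measure
space, hits every Borel set measurably. -/
theorem random_closed_set_hits_borel_measurably
    {Ω : Type*} [MeasurableSpace Ω] (μ : Measure Ω) [SigmaFinite μ]
    (hμ : μ.IsComplete)
    {X : Type*} [TopologicalSpace X] [PolishSpace X]
    [MeasurableSpace X] [BorelSpace X]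
    (F : Ω → Set X) (hFclosed : ∀ ω, IsClosed (F ω))
    (hFmeas : ∀ U : Set X, IsOpen U → MeasurableSet {ω : Ω | (F ω ∩ U).Nonempty})
    (E : Set X) (hE : MeasurableSet E) :
    MeasurableSet {ω : Ω | (F ω ∩ E).Nonempty} := by
  haveI := hμ
  rcases E.eq_empty_or_nonempty with rfl | hEne
  · simp
  obtain ⟨x0, hx0⟩ := hEne
  haveI : Nonempty X := ⟨x0⟩
  -- analytic representation of the Borel set `E`
  have hani : MeasureTheory.AnalyticSet E := hE.analyticSet
  rw [MeasureTheory.AnalyticSet] at hani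
  rcases hani with hE0 | ⟨f, hfc, hfr⟩
  · exact absurd hE0 (nonempty_iff_ne_empty.1 ⟨x0, hx0⟩)
  letI := TopologicalSpace.upgradeIsCompletelyMetrizable X
  set q : ℕ → X := TopologicalSpace.denseSeq X with hqdef
  have hq : DenseRange q := TopologicalSpace.denseRange_denseSeq X
  set e : ℕ ≃ ℕ × ℕ := (Denumerable.eqv (ℕ × ℕ)).symm with he
  set r : ℕ → ℝ := fun k => (2⁻¹ : ℝ) ^ k with hr
  have hrpos : ∀ k, 0 < r k := fun k => by positivity
  -- the open sets of the Souslin scheme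
  set W : ℕ → (ℕ → ℕ) → Set X := fun k τ =>
    Metric.thickening (r k) (f '' {σ : ℕ → ℕ | ∀ j < k, σ j = (e (τ j)).1}) ∩
      ⋂ j ∈ Finset.range k, Metric.ball (q (e (τ j)).2) (r (j + 1)) with hW
  have hWopen : ∀ k τ, IsOpen (W k τ) :=
    fun k τ => Metric.isOpen_thickening.inter
      ((Finset.range k).finite_toSet.isOpen_biInter fun j _ => Metric.isOpen_ball)
  set A : ℕ → (ℕ → ℕ) → Set Ω := fun k τ => {ω | (F ω ∩ W k τ).Nonempty} with hA
  have hpre : ∀ (k : ℕ) (τ τ' : ℕ → ℕ), (∀ j < k, τ j = τ' j) → A k τ = A k τ' := by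
    intro k τ τ' h
    have hWeq : W k τ = W k τ' := by
      have h1 : {σ : ℕ → ℕ | ∀ j < k, σ j = (e (τ j)).1}
          = {σ : ℕ → ℕ | ∀ j < k, σ j = (e (τ' j)).1} := by
        ext σ
        exact ⟨fun hσ j hj => (h j hj) ▸ hσ j hj, fun hσ j hj => (h j hj).symm ▸ hσ j hj⟩
      have h2 : (⋂ j ∈ Finset.range k, Metric.ball (q (e (τ j)).2) (r (j + 1)))
          = ⋂ j ∈ Finset.range k, Metric.ball (q (e (τ' j)).2) (r (j + 1)) := by
        refine iInter₂_congr fun j hj => ?_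
        rw [h j (Finset.mem_range.1 hj)]
      rw [hW]
      simp only [h1, h2]
    rw [hA]
    simp only [hWeq]
  have hmeas : ∀ k τ, MeasurableSet (A k τ) := fun k τ => hFmeas _ (hWopen k τ)
  -- identification of the hitting set with the Souslin set
  have hiden : {ω : Ω | (F ω ∩ E).Nonempty} = ⋃ τ : ℕ → ℕ, ⋂ k, A k τ := by
    ext ω
    simp only [mem_setOf_eq, mem_iUnion, mem_iInter]
    constructor
    · rintro ⟨x, hxF, hxE⟩
      rw [← hfr] at hxE
      obtain ⟨σ, rfl⟩ := hxE
      have hI : ∀ j : ℕ, ∃ i, dist (f σ) (q i) < r (j + 1) :=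
        fun j => hq.exists_dist_lt (f σ) (hrpos (j + 1))
      choose I hI using hI
      refine ⟨fun j => e.symm (σ j, I j), fun k => ⟨f σ, hxF, ?_, ?_⟩⟩
      · refine Metric.self_subset_thickening (hrpos k) _ ?_
        exact mem_image_of_mem f (fun j _ => by simp only [Equiv.apply_symm_apply])
      · refine mem_iInter₂.2 fun j _ => ?_
        rw [Metric.mem_ball, Equiv.apply_symm_apply]
        exact hI j
    · rintro ⟨τ, hτ⟩
      choose x hxF hxW using hτ
      have hball : ∀ j k, j < k → x k ∈ Metric.ball (q (e (τ j)).2) (r (j + 1)) :=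
        fun j k hjk => mem_iInter₂.1 (hxW k).2 j (Finset.mem_range.2 hjk)
      have hcauchy : CauchySeq x := by
        rw [Metric.cauchySeq_iff']
        intro ε hε
        obtain ⟨j, hj⟩ := exists_pow_lt_of_lt_one hε (by norm_num : (2⁻¹ : ℝ) < 1)
        refine ⟨j + 1, fun n hn => ?_⟩
        have h1 := hball j n (by omega)
        have h2 := hball j (j + 1) (by omega)
        rw [Metric.mem_ball] at h1 h2
        calc dist (x n) (x (j + 1))
            ≤ dist (x n) (q (e (τ j)).2) + dist (q (e (τ j)).2) (x (j + 1)) := dist_triangle _ _ _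
          _ < r (j + 1) + r (j + 1) := by rw [dist_comm (q (e (τ j)).2)]; exact add_lt_add h1 h2
          _ ≤ (2⁻¹ : ℝ) ^ j := by rw [hr]; simp only [pow_succ]; nlinarith [hrpos j]
          _ < ε := hj
      obtain ⟨p, hp⟩ := cauchySeq_tendsto_of_complete hcauchy
      have hpF : p ∈ F ω :=
        (hFclosed ω).mem_of_tendsto hp (Filter.Eventually.of_forall hxF)
      -- approximating points in the images of cylinders
      have hyk : ∀ k, ∃ σk : ℕ → ℕ, (∀ j < k, σk j = (e (τ j)).1)
          ∧ dist (x k) (f σk) < r k := by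
        intro k
        have := (hxW k).1
        rw [Metric.mem_thickening_iff] at this
        obtain ⟨z, ⟨σk, hσk, rfl⟩, hz⟩ := this
        exact ⟨σk, hσk, hz⟩
      choose σk hσk hσkdist using hyk
      have hσtendsto : Filter.Tendsto σk Filter.atTop (nhds (fun j => (e (τ j)).1)) := by
        rw [tendsto_pi_nhds]
        intro j
        refine Filter.Tendsto.congr' ?_ tendsto_const_nhds
        filter_upwards [Filter.eventually_ge_atTop (j + 1)] with k hk
        exact (hσk k j (by omega)).symm
      have hflim : Filter.Tendsto (fun k => f (σk k)) Filter.atTop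
          (nhds (f (fun j => (e (τ j)).1))) := (hfc.tendsto _).comp hσtendsto
      have hflim' : Filter.Tendsto (fun k => f (σk k)) Filter.atTop (nhds p) := by
        have hd : Filter.Tendsto (fun k => dist (f (σk k)) (x k)) Filter.atTop (nhds 0) := by
          refine squeeze_zero (fun k => dist_nonneg) (fun k => (dist_comm (f (σk k)) (x k) ▸ (hσkdist k).le)) ?_
          exact tendsto_pow_atTop_nhds_zero_of_lt_one (by norm_num) (by norm_num)
        exact hp.congr_dist (f₂ := fun k => f (σk k)) (by simpa [dist_comm] using hd)
      have hpeq : p = f (fun j => (e (τ j)).1) := tendsto_nhds_unique hflim' hflim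
      exact ⟨p, hpF, by rw [hpeq, ← hfr]; exact mem_range_self _⟩
  rw [hiden]
  exact (souslin_nullMeasurable μ A hpre hmeas).measurable_of_complete
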